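/- Let R be a relation on a countable set S and μ, ν discrete sub-probability distributions on S with μ = Σ_i p_i·x_i. Then μ R̂ ν if and only if for every distribution μ' = Σ_i p'_i·x_i with the same support and p'_i < p_i for all i (written μ' ≪ μ), we have μ' R̂ ν. -/

import Mathlib

open scoped ENNReal

open Filter Topology

/-- A discrete sub-probability distribution: total mass at most 1. -/
def SubDist {S : Type*} (μ : S → ℝ≥0∞) : Prop := ∑' x, μ x ≤ 1

/-- Probabilistic lifting of a relation via a matching (coupling). -/
def Lift {S : Type*} (R : S → S → Prop) (μ ν : S → ℝ≥0∞) : Prop :=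
  ∃ m : S → S → ℝ≥0∞,
    (∀ x y, m x y ≠ 0 → R x y) ∧
    (∀ x, (∑' y, m x y) = μ x) ∧
    (∀ y, (∑' x, m x y) ≤ ν y)

/-- `μ' ≪ μ`: same support, strictly smaller weight at every support point. -/
def Lll {S : Type*} (μ' μ : S → ℝ≥0∞) : Prop :=
  Function.support μ' = Function.support μ ∧ ∀ x, μ x ≠ 0 → μ' x < μ x

/-- `μ R̂ ν` holds iff it holds for every `μ' ≪ μ`. -/
theorem stmt2 {S : Type*} [Countable S] (R : S → S → Prop)
    (μ ν : S → ℝ≥0∞) (hμ : SubDist μ) (hν : SubDist ν) :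
    Lift R μ ν ↔ ∀ μ' : S → ℝ≥0∞, SubDist μ' → Lll μ' μ → Lift R μ' ν := by
  have μbd : ∀ x, μ x ≤ 1 := fun x => (ENNReal.le_tsum x).trans hμ
  have μfin : ∀ x, μ x ≠ ∞ := fun x => ne_top_of_le_ne_top ENNReal.one_ne_top (μbd x)
  constructor
  · rintro ⟨m, hR, hrow, hcol⟩ μ' hsub' ⟨hsupp, hlt⟩
    have hz : ∀ x, μ x = 0 → μ' x = 0 := by
      intro x hx
      by_contra hne
      have hmem : x ∈ Function.support μ' := Function.mem_support.mpr hne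
      rw [hsupp] at hmem
      exact hmem hx
    refine ⟨fun x y => m x y * (μ' x / μ x), ?_, ?_, ?_⟩
    · intro x y hne
      exact hR x y fun h0 => hne (by simp [h0])
    · intro x
      rw [ENNReal.tsum_mul_right, hrow]
      by_cases h0 : μ x = 0
      · rw [h0, hz x h0]; simp
      · exact ENNReal.mul_div_cancel h0 (μfin x)
    · intro y
      refine le_trans (ENNReal.tsum_le_tsum fun x => ?_) (hcol y)
      have hd : μ' x / μ x ≤ 1 := by
        by_cases h0 : μ x = 0
        · rw [hz x h0, ENNReal.zero_div]; exact zero_le_one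
        · exact ENNReal.div_le_of_le_mul (by simpa using (hlt x h0).le)
      calc m x y * (μ' x / μ x) ≤ m x y * 1 := mul_le_mul_right hd _
        _ = m x y := mul_one _
  · intro h
    set c : ℕ → ℝ≥0∞ := fun n => 1 - ((n : ℝ≥0∞) + 2)⁻¹ with hc
    have h2lt : ∀ n : ℕ, (1 : ℝ≥0∞) < (n : ℝ≥0∞) + 2 := by
      intro n
      calc (1 : ℝ≥0∞) < 2 := ENNReal.one_lt_two
        _ ≤ (n : ℝ≥0∞) + 2 := le_add_self
    have hinv_lt : ∀ n : ℕ, ((n : ℝ≥0∞) + 2)⁻¹ < 1 := fun n =>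
      ENNReal.inv_lt_one.mpr (h2lt n)
    have hc_add : ∀ n, c n + ((n : ℝ≥0∞) + 2)⁻¹ = 1 := fun n =>
      tsub_add_cancel_of_le (hinv_lt n).le
    have hc_ne : ∀ n, c n ≠ 0 := by
      intro n hn
      exact absurd (tsub_eq_zero_iff_le.mp hn) (not_le.mpr (hinv_lt n))
    have hc_lt : ∀ n, c n < 1 := by
      intro n
      refine ENNReal.sub_lt_self ENNReal.one_ne_top one_ne_zero ?_
      exact ENNReal.inv_ne_zero.mpr (by simp)
    set μseq : ℕ → S → ℝ≥0∞ := fun n x => c n * μ x with hμseq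
    have hsub : ∀ n, SubDist (μseq n) := by
      intro n
      unfold SubDist
      rw [ENNReal.tsum_mul_left]
      exact mul_le_one' (hc_lt n).le hμ
    have hlll : ∀ n, Lll (μseq n) μ := by
      intro n
      constructor
      · ext x
        simp [Function.mem_support, hμseq, mul_eq_zero, hc_ne n]
      · intro x hx
        calc c n * μ x < 1 * μ x :=
              ENNReal.mul_lt_mul_left hx (μfin x) (hc_lt n)
          _ = μ x := one_mul _
    choose M hMR hMrow hMcol using fun n => h (μseq n) (hsub n) (hlll n)
    obtain ⟨m, -, φ, hφ, hlim⟩ :=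
      isCompact_univ.tendsto_subseq (x := M) (fun n => Set.mem_univ _)
    have hpt : ∀ x y, Tendsto (fun k => M (φ k) x y) atTop (𝓝 (m x y)) := fun x y =>
      tendsto_pi_nhds.mp (tendsto_pi_nhds.mp hlim x) y
    refine ⟨m, ?_, ?_, ?_⟩
    · intro x y hne
      have hev : ∀ᶠ k in atTop, M (φ k) x y ≠ 0 :=
        (hpt x y).eventually (isOpen_ne.mem_nhds hne)
      obtain ⟨k, hk⟩ := hev.exists
      exact hMR (φ k) x y hk
    · intro x
      apply le_antisymm
      · rw [ENNReal.tsum_eq_iSup_sum]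
        refine iSup_le fun F => ?_
        have hub : ∀ k, ∑ y ∈ F, M (φ k) x y ≤ μ x := by
          intro k
          calc ∑ y ∈ F, M (φ k) x y ≤ ∑' y, M (φ k) x y := ENNReal.sum_le_tsum F
            _ = c (φ k) * μ x := hMrow (φ k) x
            _ ≤ 1 * μ x := mul_le_mul_left (hc_lt (φ k)).le _
            _ = μ x := one_mul _
        exact le_of_tendsto (tendsto_finset_sum F fun y _ => hpt x y)
          (Eventually.of_forall hub)
      · refine ENNReal.le_of_forall_pos_le_add fun ε hε _ => ?_
        have hν_ne : ∑' y, ν y ≠ ∞ := ne_top_of_le_ne_top ENNReal.one_ne_top hν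
        obtain ⟨F, hF⟩ : ∃ F : Finset S, (∑' y : {y // y ∉ F}, ν (y : S)) ≤ (ε : ℝ≥0∞) := by
          have := (ENNReal.tendsto_tsum_compl_atTop_zero hν_ne).eventually
            (ge_mem_nhds (by exact_mod_cast hε : (0 : ℝ≥0∞) < ε))
          exact this.exists
        have hsplit : ∀ n, c n * μ x ≤ ∑ y ∈ F, M n x y + (ε : ℝ≥0∞) := by
          intro n
          have htail : (∑' y : {y // y ∉ F}, M n x (y : S)) ≤ (ε : ℝ≥0∞) := by
            refine le_trans (ENNReal.tsum_le_tsum fun y => ?_) hF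
            exact le_trans (ENNReal.le_tsum x) (hMcol n y)
          have heq : (∑' y, M n x y) =
              ∑ y ∈ F, M n x y + ∑' y : {y // y ∉ F}, M n x (y : S) := by
            rw [← Finset.tsum_subtype F (fun y => M n x y)]
            exact (Summable.tsum_add_tsum_compl (s := (↑F : Set S))
              ENNReal.summable ENNReal.summable).symm
          calc c n * μ x = ∑' y, M n x y := (hMrow n x).symm
            _ = ∑ y ∈ F, M n x y + ∑' y : {y // y ∉ F}, M n x (y : S) := heq
            _ ≤ ∑ y ∈ F, M n x y + (ε : ℝ≥0∞) := add_le_add_right htail _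
        have key : ∀ k, μ x ≤ ∑ y ∈ F, M (φ k) x y + ((ε : ℝ≥0∞) + ((φ k : ℝ≥0∞) + 2)⁻¹) := by
          intro k
          have h1 : μ x = c (φ k) * μ x + ((φ k : ℝ≥0∞) + 2)⁻¹ * μ x := by
            rw [← add_mul, hc_add (φ k), one_mul]
          have h2 : ((φ k : ℝ≥0∞) + 2)⁻¹ * μ x ≤ ((φ k : ℝ≥0∞) + 2)⁻¹ :=
            mul_le_of_le_one_right' (μbd x)
          calc μ x = c (φ k) * μ x + ((φ k : ℝ≥0∞) + 2)⁻¹ * μ x := h1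
            _ ≤ (∑ y ∈ F, M (φ k) x y + (ε : ℝ≥0∞)) + ((φ k : ℝ≥0∞) + 2)⁻¹ :=
              add_le_add (hsplit (φ k)) h2
            _ = ∑ y ∈ F, M (φ k) x y + ((ε : ℝ≥0∞) + ((φ k : ℝ≥0∞) + 2)⁻¹) := by
              rw [add_assoc]
        have hinvlim : Tendsto (fun k => ((φ k : ℝ≥0∞) + 2)⁻¹) atTop (𝓝 0) := by
          have hbase : Tendsto (fun k => ((φ k : ℝ≥0∞))⁻¹) atTop (𝓝 0) :=
            ENNReal.tendsto_inv_nat_nhds_zero.comp hφ.tendsto_atTop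
          refine tendsto_of_tendsto_of_tendsto_of_le_of_le tendsto_const_nhds hbase
            (fun k => zero_le) (fun k => ?_)
          exact ENNReal.inv_le_inv' le_self_add
        have hlimR : Tendsto
            (fun k => ∑ y ∈ F, M (φ k) x y + ((ε : ℝ≥0∞) + ((φ k : ℝ≥0∞) + 2)⁻¹))
            atTop (𝓝 (∑ y ∈ F, m x y + ((ε : ℝ≥0∞) + 0))) :=
          (tendsto_finset_sum F fun y _ => hpt x y).add (tendsto_const_nhds.add hinvlim)
        have := ge_of_tendsto' hlimR key
        calc μ x ≤ ∑ y ∈ F, m x y + ((ε : ℝ≥0∞) + 0) := this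
          _ = ∑ y ∈ F, m x y + (ε : ℝ≥0∞) := by rw [add_zero]
          _ ≤ (∑' y, m x y) + (ε : ℝ≥0∞) := add_le_add_left (ENNReal.sum_le_tsum F) _
    · intro y
      rw [ENNReal.tsum_eq_iSup_sum]
      refine iSup_le fun F => ?_
      have hub : ∀ k, ∑ x ∈ F, M (φ k) x y ≤ ν y := by
        intro k
        calc ∑ x ∈ F, M (φ k) x y ≤ ∑' x, M (φ k) x y :=
              ENNReal.sum_le_tsum F
          _ ≤ ν y := hMcol (φ k) y
      exact le_of_tendsto (tendsto_finset_sum F fun x _ => hpt x y)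
        (Eventually.of_forall hub)
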